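/- Let p, q be unit quaternions and let Z be a tangent vector to S³×S³ at (p,q) with g(Z,Z) = 1 and PZ = −½ Z + (√3/2) JZ. Set ξ = (1/√3) Z − JZ. Then Qξ = −ξ (i.e. the second component of ξ vanishes, so ξ lies entirely along the first S³-factor) and ⟨ξ,ξ⟩ = 1. -/

import Mathlib

noncomputable section

open Quaternion

/-- Euclidean inner product on the quaternions: `⟨x,y⟩ = Re (x * star y)`. -/
def ipQ (x y : ℍ[ℝ]) : ℝ := (x * star y).re

/-- Euclidean inner product on pairs of quaternions. -/
def ip2Q (Z W : ℍ[ℝ] × ℍ[ℝ]) : ℝ := ipQ Z.1 W.1 + ipQ Z.2 W.2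

/-- The almost complex structure `J` of the nearly Kähler `S³ × S³` at `(p,q)`:
`J(U,V) = (1/√3)(2pq⁻¹V − U, −2qp⁻¹U + V)`. -/
def Jmap (p q : ℍ[ℝ]) (Z : ℍ[ℝ] × ℍ[ℝ]) : ℍ[ℝ] × ℍ[ℝ] :=
  ((Real.sqrt 3)⁻¹ • ((2 : ℝ) • (p * q⁻¹ * Z.2) - Z.1),
   (Real.sqrt 3)⁻¹ • (-((2 : ℝ) • (q * p⁻¹ * Z.1)) + Z.2))

/-- The nearly Kähler metric `g(Z,Z') = ½(⟨Z,Z'⟩ + ⟨JZ,JZ'⟩)`. -/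
def gmet (p q : ℍ[ℝ]) (Z W : ℍ[ℝ] × ℍ[ℝ]) : ℝ :=
  (1 / 2) * (ip2Q Z W + ip2Q (Jmap p q Z) (Jmap p q W))

/-- The almost product structure `P(U,V) = (pq⁻¹V, qp⁻¹U)`. -/
def Pmap (p q : ℍ[ℝ]) (Z : ℍ[ℝ] × ℍ[ℝ]) : ℍ[ℝ] × ℍ[ℝ] :=
  (p * q⁻¹ * Z.2, q * p⁻¹ * Z.1)

/-- The usual product structure `Q(U,V) = (−U, V)`. -/
def Qmap (Z : ℍ[ℝ] × ℍ[ℝ]) : ℍ[ℝ] × ℍ[ℝ] := (-Z.1, Z.2)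

/-- Cross product of (imaginary) quaternions: `α × β = ½(αβ − βα)`. -/
def crossQ (a b : ℍ[ℝ]) : ℍ[ℝ] := (1 / 2 : ℝ) • (a * b - b * a)

/-- The tensor `G = ∇̃J` at `(p,q)`, evaluated on tangent vectors `X = (pα, qβ)`,
`Y = (pγ, qδ)` (so `α = p⁻¹X₁`, etc.):
`G(X,Y) = (2/(3√3))(p(β×γ + α×δ + α×γ − 2β×δ), q(−α×δ − β×γ + 2α×γ − β×δ))`. -/
def Gmap (p q : ℍ[ℝ]) (X Y : ℍ[ℝ] × ℍ[ℝ]) : ℍ[ℝ] × ℍ[ℝ] :=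
  (2 / (3 * Real.sqrt 3) : ℝ) •
    ((p * (crossQ (q⁻¹ * X.2) (p⁻¹ * Y.1) + crossQ (p⁻¹ * X.1) (q⁻¹ * Y.2)
        + crossQ (p⁻¹ * X.1) (p⁻¹ * Y.1) - (2 : ℝ) • crossQ (q⁻¹ * X.2) (q⁻¹ * Y.2)),
      q * (-(crossQ (p⁻¹ * X.1) (q⁻¹ * Y.2)) - crossQ (q⁻¹ * X.2) (p⁻¹ * Y.1)
        + (2 : ℝ) • crossQ (p⁻¹ * X.1) (p⁻¹ * Y.1) - crossQ (q⁻¹ * X.2) (q⁻¹ * Y.2))))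

lemma ipQ_self (x : ℍ[ℝ]) : ipQ x x = Quaternion.normSq x := by
  simp [ipQ, Quaternion.self_mul_star]

/-- for a `g`-unit eigendirection `Z` with angle `π/3`, the vector
`ξ = (1/√3)Z − JZ` satisfies `Qξ = −ξ` and has Euclidean length `1`. -/
theorem stmt7 (p q : ℍ[ℝ]) (hp : ‖p‖ = 1) (hq : ‖q‖ = 1)
    (Z : ℍ[ℝ] × ℍ[ℝ]) (hZ1 : ipQ Z.1 p = 0) (hZ2 : ipQ Z.2 q = 0)
    (hunit : gmet p q Z Z = 1)
    (heig : Pmap p q Z = -((1 / 2 : ℝ) • Z) + (Real.sqrt 3 / 2 : ℝ) • Jmap p q Z)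
    (ξ : ℍ[ℝ] × ℍ[ℝ]) (hξ : ξ = (Real.sqrt 3)⁻¹ • Z - Jmap p q Z) :
    Qmap ξ = -ξ ∧ ip2Q ξ ξ = 1 := by
  have hs : Real.sqrt 3 * Real.sqrt 3 = 3 := Real.mul_self_sqrt (by norm_num)
  have hs0 : Real.sqrt 3 ≠ 0 := by positivity
  have hp0 : p ≠ 0 := by intro h; rw [h] at hp; simp at hp
  have hq0 : q ≠ 0 := by intro h; rw [h] at hq; simp at hq
  -- extract Z.1 = 0 from the second component of heig
  have h2 := congrArg Prod.snd heig
  simp only [Pmap, Jmap, Prod.snd_neg, Prod.snd_add, Prod.smul_snd, smul_smul] at h2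
  have hkey : Real.sqrt 3 / 2 * (Real.sqrt 3)⁻¹ = 1 / 2 := by
    field_simp
  rw [hkey] at h2
  have h3 : (2 : ℝ) • (q * p⁻¹ * Z.1) = 0 := by
    linear_combination (norm := module) h2
  have hA : q * p⁻¹ * Z.1 = 0 := by
    rcases smul_eq_zero.mp h3 with h | h
    · norm_num at h
    · exact h
  have hU : Z.1 = 0 := by
    calc Z.1 = p * (q⁻¹ * (q * (p⁻¹ * Z.1))) := by
          rw [← mul_assoc q⁻¹, inv_mul_cancel₀ hq0, one_mul, ← mul_assoc,
            mul_inv_cancel₀ hp0, one_mul]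
      _ = 0 := by rw [← mul_assoc q, hA, mul_zero, mul_zero]
  have hnp : Quaternion.normSq p = 1 := by
    rw [Quaternion.normSq_eq_norm_mul_self, hp]; norm_num
  have hnq : Quaternion.normSq q = 1 := by
    rw [Quaternion.normSq_eq_norm_mul_self, hq]; norm_num
  have hw : Quaternion.normSq (p * q⁻¹ * Z.2) = Quaternion.normSq Z.2 := by
    simp [map_mul, map_inv₀, hnp, hnq]
  have hinv : ((Real.sqrt 3)⁻¹ : ℝ) ^ 2 = 1 / 3 := by
    rw [← one_div, div_pow, one_pow, sq, hs]
  have hV : Quaternion.normSq Z.2 = 3 / 4 := by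
    simp only [gmet, ip2Q, ipQ_self, Jmap, hU, mul_zero, smul_zero, neg_zero, zero_add,
      sub_zero, Quaternion.normSq_smul, map_zero, hw] at hunit
    rw [hinv] at hunit
    nlinarith [hunit]
  constructor
  · rw [hξ]
    refine Prod.ext ?_ ?_
    · simp [Qmap]
    · simp [Qmap, Jmap, hU]
  · rw [hξ]
    simp only [ip2Q, ipQ_self, Jmap, hU, mul_zero, smul_zero, neg_zero, zero_add, sub_zero,
      Prod.fst_sub, Prod.snd_sub, Prod.smul_fst, Prod.smul_snd, zero_sub, sub_self,
      Quaternion.normSq_neg, Quaternion.normSq_smul, map_zero, hw]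
    rw [hinv, hV]
    norm_num
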